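/- Let m be even and B₁, B₂ : F_{2^m} → F_2 bent functions with W = W_{B₁}(0)W_{B₂}(0) = ±2^m. The binary code of length 2^{2m-1} + W/2 with codewords (a + Tr(bx+cy))_{(x,y) ∈ D}, where D = {(x,y) : B₁(x) + B₂(y) = 0}, a ∈ F_2 and b, c ∈ F_{2^m}, has dimension 2m+1 and exactly three nonzero weights: 2^{2m-2} + W/4 - 2^{m-2} with multiplicity 2^{2m} - 1, 2^{2m-2} + W/4 + 2^{m-2} with multiplicity 2^{2m} - 1, and 2^{2m-1} + W/2 with multiplicity 1. -/

import Mathlib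

open scoped Classical
open Finset

/-- The codeword `(a + Tr(bx + cy))_{(x,y) ∈ D}` with
`D = {(x,y) : B₁(x) + B₂(y) = 0}`, for `u = (a,b,c)`. -/
noncomputable def cw17 {K : Type*} [Field K] [Fintype K] [Algebra (ZMod 2) K]
    (B₁ B₂ : K → ZMod 2) (u : ZMod 2 × K × K) :
    {p : K × K // B₁ p.1 + B₂ p.2 = 0} → ZMod 2 :=
  fun p => u.1 + Algebra.trace (ZMod 2) K (u.2.1 * p.1.1 + u.2.2 * p.1.2)

/-- The Hamming weight of a codeword. -/
noncomputable def wt17 {K : Type*} [Fintype K] {B₁ B₂ : K → ZMod 2}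
    (f : {p : K × K // B₁ p.1 + B₂ p.2 = 0} → ZMod 2) : ℕ :=
  (univ.filter (fun p => f p ≠ 0)).card

private lemma eps_add17 (s t : ZMod 2) :
    (-1:ℤ)^(s+t).val = (-1:ℤ)^s.val * (-1:ℤ)^t.val := by
  fin_cases s <;> fin_cases t <;> decide

private lemma eps_cases17 (s : ZMod 2) : s = 0 ∨ s = 1 := by
  fin_cases s
  · exact Or.inl rfl
  · exact Or.inr rfl

/-- The character sum `T(b) = ∑ (-1)^{Tr(bx)}`. -/
noncomputable def T17 (K : Type*) [Field K] [Fintype K] [Algebra (ZMod 2) K]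
    (b : K) : ℤ :=
  ∑ x : K, (-1:ℤ)^((Algebra.trace (ZMod 2) K) (b*x)).val

/-- The Walsh transform `S_B(b) = ∑ (-1)^{B(x)+Tr(bx)}`. -/
noncomputable def S17 {K : Type*} [Field K] [Fintype K] [Algebra (ZMod 2) K]
    (B : K → ZMod 2) (b : K) : ℤ :=
  ∑ x : K, (-1:ℤ)^(B x + (Algebra.trace (ZMod 2) K) (b*x)).val

section
variable {K : Type*} [Field K] [Fintype K] [Algebra (ZMod 2) K]

private lemma T17_zero : T17 K 0 = (Fintype.card K : ℤ) := by
  simp [T17]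

private lemma T17_ne (b : K) (hb : b ≠ 0) : T17 K b = 0 := by
  unfold T17
  have htr : Algebra.trace (ZMod 2) K ≠ 0 := Algebra.trace_ne_zero (ZMod 2) K
  obtain ⟨y, hy⟩ : ∃ y : K, Algebra.trace (ZMod 2) K y ≠ 0 := by
    by_contra h
    push_neg at h
    exact htr (LinearMap.ext fun y => h y)
  have hy1 : Algebra.trace (ZMod 2) K y = 1 := by
    rcases eps_cases17 (Algebra.trace (ZMod 2) K y) with h | h
    · exact absurd h hy
    · exact h
  set x₀ : K := b⁻¹ * y with hx₀
  have hbx₀ : b * x₀ = y := by rw [hx₀, ← mul_assoc, mul_inv_cancel₀ hb, one_mul]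
  have key : (∑ x : K, (-1:ℤ)^(Algebra.trace (ZMod 2) K (b*x)).val)
      = ∑ x : K, (-1:ℤ)^(Algebra.trace (ZMod 2) K (b*(x + x₀))).val :=
    (Fintype.sum_equiv (Equiv.addRight x₀) _ _ (fun x => rfl)).symm
  have step : ∀ x : K, (-1:ℤ)^(Algebra.trace (ZMod 2) K (b*(x + x₀))).val
      = -(-1:ℤ)^(Algebra.trace (ZMod 2) K (b*x)).val := by
    intro x
    rw [mul_add, map_add, hbx₀, hy1, eps_add17]
    simp [ZMod.val_one]
  rw [Finset.sum_congr rfl (fun x _ => step x), Finset.sum_neg_distrib] at key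
  linarith

private lemma key17 (B₁ B₂ : K → ZMod 2) (a : ZMod 2) (b c : K) :
    2 * (∑ p : {p : K × K // B₁ p.1 + B₂ p.2 = 0}, (-1:ℤ)^(cw17 B₁ B₂ (a,b,c) p).val)
      = (-1:ℤ)^a.val * (T17 K b * T17 K c + S17 B₁ b * S17 B₂ c) := by
  classical
  set Tr := Algebra.trace (ZMod 2) K with hTr
  have hsub : (∑ p : {p : K × K // B₁ p.1 + B₂ p.2 = 0}, (-1:ℤ)^(cw17 B₁ B₂ (a,b,c) p).val)
      = ∑ z ∈ univ.filter (fun z : K × K => B₁ z.1 + B₂ z.2 = 0),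
          (-1:ℤ)^(a + Tr (b * z.1 + c * z.2)).val := by
    rw [Finset.sum_subtype (p := fun z : K × K => B₁ z.1 + B₂ z.2 = 0)
      (univ.filter (fun z : K × K => B₁ z.1 + B₂ z.2 = 0))
      (fun z => by simp) (fun z : K × K => (-1:ℤ)^(a + Tr (b * z.1 + c * z.2)).val)]
    exact Finset.sum_congr (by congr!) (fun p _ => rfl)
  rw [hsub, Finset.mul_sum, Finset.sum_filter]
  have point : ∀ z : K × K,
      (if B₁ z.1 + B₂ z.2 = 0 then 2 * (-1:ℤ)^(a + Tr (b*z.1 + c*z.2)).val else 0)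
      = (-1:ℤ)^a.val * ((-1:ℤ)^(Tr (b*z.1)).val * (-1:ℤ)^(Tr (c*z.2)).val)
        + (-1:ℤ)^a.val * ((-1:ℤ)^(B₁ z.1 + Tr (b*z.1)).val * (-1:ℤ)^(B₂ z.2 + Tr (c*z.2)).val) := by
    intro z
    have h1 : (-1:ℤ)^(a + Tr (b*z.1 + c*z.2)).val
        = (-1:ℤ)^a.val * ((-1:ℤ)^(Tr (b*z.1)).val * (-1:ℤ)^(Tr (c*z.2)).val) := by
      rw [map_add, eps_add17 a _, eps_add17]
    have h2 : (-1:ℤ)^(B₁ z.1 + Tr (b*z.1)).val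
        = (-1:ℤ)^(B₁ z.1).val * (-1:ℤ)^(Tr (b*z.1)).val := eps_add17 _ _
    have h3 : (-1:ℤ)^(B₂ z.2 + Tr (c*z.2)).val
        = (-1:ℤ)^(B₂ z.2).val * (-1:ℤ)^(Tr (c*z.2)).val := eps_add17 _ _
    rcases eps_cases17 (B₁ z.1 + B₂ z.2) with hz | hz
    · have hpq : (-1:ℤ)^(B₁ z.1).val * (-1:ℤ)^(B₂ z.2).val = 1 := by
        rw [← eps_add17, hz]; simp
      rw [if_pos hz, h1, h2, h3]
      linear_combination (-((-1:ℤ)^a.val * ((-1:ℤ)^(Tr (b*z.1)).val * (-1:ℤ)^(Tr (c*z.2)).val))) * hpq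
    · have hz0 : ¬ (B₁ z.1 + B₂ z.2 = 0) := by rw [hz]; exact one_ne_zero
      have hpq : (-1:ℤ)^(B₁ z.1).val * (-1:ℤ)^(B₂ z.2).val = -1 := by
        rw [← eps_add17, hz]; simp [ZMod.val_one]
      rw [if_neg hz0, h2, h3]
      linear_combination (-((-1:ℤ)^a.val * ((-1:ℤ)^(Tr (b*z.1)).val * (-1:ℤ)^(Tr (c*z.2)).val))) * hpq
  rw [Finset.sum_congr rfl (fun z _ => point z)]
  unfold T17 S17
  rw [← hTr]
  simp only [Fintype.sum_prod_type]
  rw [Finset.sum_mul_sum, Finset.sum_mul_sum, mul_add, Finset.mul_sum, Finset.mul_sum,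
    ← Finset.sum_add_distrib]
  refine Finset.sum_congr rfl fun x _ => ?_
  rw [Finset.mul_sum, Finset.mul_sum, ← Finset.sum_add_distrib]

private lemma wt_rel17 {B₁ B₂ : K → ZMod 2}
    (f : {p : K × K // B₁ p.1 + B₂ p.2 = 0} → ZMod 2) :
    (Fintype.card {p : K × K // B₁ p.1 + B₂ p.2 = 0} : ℤ)
      - ∑ p, (-1:ℤ)^(f p).val = 2 * (wt17 f : ℤ) := by
  classical
  have point : ∀ p, (1:ℤ) - (-1:ℤ)^(f p).val = if f p ≠ 0 then 2 else 0 := by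
    intro p
    rcases eps_cases17 (f p) with h | h <;> simp [h, ZMod.val_one]
  have h1 : (Fintype.card {p : K × K // B₁ p.1 + B₂ p.2 = 0} : ℤ)
      - ∑ p, (-1:ℤ)^(f p).val = ∑ p, ((1:ℤ) - (-1:ℤ)^(f p).val) := by
    rw [Finset.sum_sub_distrib, Finset.sum_const, Finset.card_univ]
    simp
  rw [h1, Finset.sum_congr rfl (fun p _ => point p), ← Finset.sum_filter,
    Finset.sum_const, wt17]
  push_cast
  ring

private lemma cw17_sub (B₁ B₂ : K → ZMod 2) (u v : ZMod 2 × K × K) :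
    cw17 B₁ B₂ (u - v) = cw17 B₁ B₂ u - cw17 B₁ B₂ v := by
  funext p
  simp only [cw17, Prod.fst_sub, Prod.snd_sub, Pi.sub_apply]
  have h : (u.2.1 - v.2.1) * p.1.1 + (u.2.2 - v.2.2) * p.1.2
      = (u.2.1 * p.1.1 + u.2.2 * p.1.2) - (v.2.1 * p.1.1 + v.2.2 * p.1.2) := by ring
  rw [h, map_sub]
  ring
end

set_option maxHeartbeats 1000000 in
/-- the binary code `C̄_{f₆,g₆}^{(2)}` from two bent functions has
length `2^{2m-1} + W/2`, dimension `2m+1`, and exactly the three stated nonzero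
weights with the stated multiplicities. -/
theorem stmt17 {K : Type*} [Field K] [Fintype K] [Algebra (ZMod 2) K]
    (m : ℕ) (hm : Even m) (hm0 : 0 < m) (hK : Fintype.card K = 2 ^ m)
    (B₁ B₂ : K → ZMod 2)
    (hB₁ : ∀ b : K,
      (∑ x : K, (-1 : ℤ) ^ (B₁ x + Algebra.trace (ZMod 2) K (b * x)).val)
        = 2 ^ (m / 2) ∨
      (∑ x : K, (-1 : ℤ) ^ (B₁ x + Algebra.trace (ZMod 2) K (b * x)).val)
        = -2 ^ (m / 2))
    (hB₂ : ∀ b : K,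
      (∑ x : K, (-1 : ℤ) ^ (B₂ x + Algebra.trace (ZMod 2) K (b * x)).val)
        = 2 ^ (m / 2) ∨
      (∑ x : K, (-1 : ℤ) ^ (B₂ x + Algebra.trace (ZMod 2) K (b * x)).val)
        = -2 ^ (m / 2))
    (W : ℤ)
    (hW : W = (∑ x : K, (-1 : ℤ) ^ (B₁ x).val) * (∑ x : K, (-1 : ℤ) ^ (B₂ x).val)) :
    ((Fintype.card {p : K × K // B₁ p.1 + B₂ p.2 = 0} : ℤ)
        = 2 ^ (2 * m - 1) + W / 2) ∧
    Function.Injective (cw17 B₁ B₂) ∧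
    (∀ u : ZMod 2 × K × K, u ≠ 0 →
      (wt17 (cw17 B₁ B₂ u) : ℤ) = 2 ^ (2 * m - 2) + W / 4 - 2 ^ (m - 2) ∨
      (wt17 (cw17 B₁ B₂ u) : ℤ) = 2 ^ (2 * m - 2) + W / 4 + 2 ^ (m - 2) ∨
      (wt17 (cw17 B₁ B₂ u) : ℤ) = 2 ^ (2 * m - 1) + W / 2) ∧
    (univ.filter (fun u : ZMod 2 × K × K => u ≠ 0 ∧
        (wt17 (cw17 B₁ B₂ u) : ℤ) = 2 ^ (2 * m - 2) + W / 4 - 2 ^ (m - 2))).card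
      = 2 ^ (2 * m) - 1 ∧
    (univ.filter (fun u : ZMod 2 × K × K => u ≠ 0 ∧
        (wt17 (cw17 B₁ B₂ u) : ℤ) = 2 ^ (2 * m - 2) + W / 4 + 2 ^ (m - 2))).card
      = 2 ^ (2 * m) - 1 ∧
    (univ.filter (fun u : ZMod 2 × K × K => u ≠ 0 ∧
        (wt17 (cw17 B₁ B₂ u) : ℤ) = 2 ^ (2 * m - 1) + W / 2)).card = 1 := by
  classical
  have hm2 : 2 ≤ m := by obtain ⟨k, hk⟩ := hm; omega
  have hhalf : m / 2 + m / 2 = m := by obtain ⟨k, hk⟩ := hm; omega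
  obtain ⟨e, rfl⟩ : ∃ e, m = e + 2 := ⟨m - 2, by omega⟩
  have E1 : 2 * (e + 2) - 1 = 2 * e + 3 := by omega
  have E2 : 2 * (e + 2) - 2 = 2 * e + 2 := by omega
  have E3 : (e + 2) - 2 = e := by omega
  have E4 : 2 * (e + 2) = 2 * e + 4 := by omega
  simp only [E1, E2, E3, E4]
  -- Walsh transforms in `S17` form
  have hB₁' : ∀ b : K, S17 B₁ b = 2 ^ ((e+2) / 2) ∨ S17 B₁ b = -2 ^ ((e+2) / 2) := hB₁
  have hB₂' : ∀ b : K, S17 B₂ b = 2 ^ ((e+2) / 2) ∨ S17 B₂ b = -2 ^ ((e+2) / 2) := hB₂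
  have hWS : W = S17 B₁ 0 * S17 B₂ 0 := by
    have h1 : S17 B₁ 0 = ∑ x : K, (-1:ℤ)^(B₁ x).val := by simp [S17]
    have h2 : S17 B₂ 0 = ∑ x : K, (-1:ℤ)^(B₂ x).val := by simp [S17]
    rw [h1, h2]; exact hW
  have hprod : ∀ s t : ℤ,
      (s = 2 ^ ((e+2) / 2) ∨ s = -2 ^ ((e+2) / 2)) →
      (t = 2 ^ ((e+2) / 2) ∨ t = -2 ^ ((e+2) / 2)) →
      (s * t = 2 ^ (e+2) ∨ s * t = -2 ^ (e+2)) := by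
    intro s t hs ht
    have hp : (2:ℤ) ^ ((e+2)/2) * 2 ^ ((e+2)/2) = 2 ^ (e+2) := by
      rw [← pow_add, hhalf]
    rcases hs with hs | hs <;> rcases ht with ht | ht <;> rw [hs, ht]
    · exact Or.inl (by linear_combination hp)
    · exact Or.inr (by linear_combination -hp)
    · exact Or.inr (by linear_combination -hp)
    · exact Or.inl (by linear_combination hp)
  have hWpm : W = 2 ^ (e+2) ∨ W = -2 ^ (e+2) := by
    rw [hWS]; exact hprod _ _ (hB₁' 0) (hB₂' 0)
  obtain ⟨ε, hε, hWε⟩ : ∃ ε : ℤ, (ε = 1 ∨ ε = -1) ∧ W = ε * 2 ^ (e+2) := by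
    rcases hWpm with h | h
    · exact ⟨1, Or.inl rfl, by linarith⟩
    · exact ⟨-1, Or.inr rfl, by linarith⟩
  have hW2 : W / 2 = ε * 2 ^ (e+1) := by
    rw [hWε]
    have h : ε * 2 ^ (e+2) = (ε * 2 ^ (e+1)) * 2 := by ring
    rw [h]; exact Int.mul_ediv_cancel _ two_ne_zero
  have hW4 : W / 4 = ε * 2 ^ e := by
    rw [hWε]
    have h : ε * 2 ^ (e+2) = (ε * 2 ^ e) * 4 := by ring
    rw [h]; exact Int.mul_ediv_cancel _ (by norm_num)
  have hT0 : T17 K 0 = 2 ^ (e+2) := by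
    rw [T17_zero, hK]; push_cast; ring
  -- cardinality of D
  have hcard2 : 2 * (Fintype.card {p : K × K // B₁ p.1 + B₂ p.2 = 0} : ℤ)
      = 2 ^ (2*e+4) + W := by
    have h := key17 B₁ B₂ (0 : ZMod 2) (0 : K) (0 : K)
    have hcw0 : ∀ p : {p : K × K // B₁ p.1 + B₂ p.2 = 0},
        cw17 B₁ B₂ ((0 : ZMod 2), (0:K), (0:K)) p = 0 := fun p => by simp [cw17]
    simp only [hcw0, ZMod.val_zero, pow_zero, Finset.sum_const, Finset.card_univ,
      nsmul_eq_mul, smul_eq_mul, mul_one, one_mul, hT0] at h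
    rw [h, ← hWS]
    ring
  have hcardD : (Fintype.card {p : K × K // B₁ p.1 + B₂ p.2 = 0} : ℤ)
      = 2 ^ (2*e+3) + W / 2 := by
    rw [hW2]
    refine mul_left_cancel₀ (two_ne_zero) ?_
    rw [hcard2, hWε]
    ring
  -- master weight formula
  have hwt4 : ∀ (a : ZMod 2) (b c : K),
      4 * (wt17 (cw17 B₁ B₂ (a,b,c)) : ℤ)
        = 2 ^ (2*e+4) + W - (-1:ℤ)^a.val * (T17 K b * T17 K c + S17 B₁ b * S17 B₂ c) := by
    intro a b c
    have h1 := wt_rel17 (cw17 B₁ B₂ (a,b,c))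
    have h2 := key17 B₁ B₂ a b c
    linarith [hcard2]
  have epsa : ∀ a : ZMod 2, ((-1:ℤ)^a.val = 1 ∧ a = 0) ∨ ((-1:ℤ)^a.val = -1 ∧ a = 1) := by
    intro a
    rcases eps_cases17 a with h | h
    · exact Or.inl ⟨by simp [h], h⟩
    · exact Or.inr ⟨by simp [h, ZMod.val_one], h⟩
  have hsign : ∀ b c : K, S17 B₁ b * S17 B₂ c = 2 ^ (e+2) ∨ S17 B₁ b * S17 B₂ c = -2 ^ (e+2) :=
    fun b c => hprod _ _ (hB₁' b) (hB₂' c)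
  have hTzero : ∀ b c : K, ¬(b = 0 ∧ c = 0) → T17 K b * T17 K c = 0 := by
    intro b c h
    by_cases hb : b = 0
    · have hc : c ≠ 0 := fun hc => h ⟨hb, hc⟩
      rw [T17_ne c hc, mul_zero]
    · rw [T17_ne b hb, zero_mul]
  -- characterization of the two middle weights
  have hwt_char : ∀ (a : ZMod 2) (b c : K), ¬(b = 0 ∧ c = 0) →
      ((-1:ℤ)^a.val * (S17 B₁ b * S17 B₂ c) = 2 ^ (e+2) ∧
        (wt17 (cw17 B₁ B₂ (a,b,c)) : ℤ) = 2 ^ (2*e+2) + W / 4 - 2 ^ e) ∨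
      ((-1:ℤ)^a.val * (S17 B₁ b * S17 B₂ c) = -2 ^ (e+2) ∧
        (wt17 (cw17 B₁ B₂ (a,b,c)) : ℤ) = 2 ^ (2*e+2) + W / 4 + 2 ^ e) := by
    intro a b c hbc
    have h4 := hwt4 a b c
    rw [hTzero b c hbc, zero_add, hWε] at h4
    have hfour : (4:ℤ) ≠ 0 := by norm_num
    rcases epsa a with ⟨h1, _⟩ | ⟨h1, _⟩ <;> rcases hsign b c with h2 | h2
    · left
      refine ⟨by rw [h1, h2]; ring, ?_⟩
      rw [hW4]
      refine mul_left_cancel₀ hfour ?_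
      rw [h4, h1, h2]; ring
    · right
      refine ⟨by rw [h1, h2]; ring, ?_⟩
      rw [hW4]
      refine mul_left_cancel₀ hfour ?_
      rw [h4, h1, h2]; ring
    · right
      refine ⟨by rw [h1, h2]; ring, ?_⟩
      rw [hW4]
      refine mul_left_cancel₀ hfour ?_
      rw [h4, h1, h2]; ring
    · left
      refine ⟨by rw [h1, h2]; ring, ?_⟩
      rw [hW4]
      refine mul_left_cancel₀ hfour ?_
      rw [h4, h1, h2]; ring
  -- the full-weight codeword
  have hwt_full : ∀ a : ZMod 2, a ≠ 0 →
      (wt17 (cw17 B₁ B₂ (a, (0:K), (0:K))) : ℤ) = 2 ^ (2*e+3) + W / 2 := by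
    intro a ha
    have ha1 : a = 1 := by
      rcases eps_cases17 a with h | h
      · exact absurd h ha
      · exact h
    subst ha1
    have h4 := hwt4 1 0 0
    rw [hT0, ← hWS, hWε] at h4
    have h1 : ((-1:ℤ))^(1 : ZMod 2).val = -1 := by simp [ZMod.val_one]
    rw [h1] at h4
    rw [hW2]
    refine mul_left_cancel₀ (by norm_num : (4:ℤ) ≠ 0) ?_
    rw [h4]; ring
  -- numeric facts
  have P1 : (0:ℤ) < 2 ^ e := pow_pos two_pos e
  have P2 : (2:ℤ) ^ (e+1) = 2 * 2 ^ e := by ring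
  have P4 : (2:ℤ) ^ (e+1) < 2 ^ (2*e+2) := pow_lt_pow_right₀ one_lt_two (by omega)
  have P5 : (2:ℤ) ^ (2*e+3) = 2 * 2 ^ (2*e+2) := by ring
  have hεcases := hε
  -- distinctness of the three weights
  have Dsl : (2:ℤ) ^ (2*e+2) + W / 4 - 2 ^ e ≠ 2 ^ (2*e+2) + W / 4 + 2 ^ e := by
    intro h; linarith
  have Dsf : (2:ℤ) ^ (2*e+2) + W / 4 - 2 ^ e ≠ 2 ^ (2*e+3) + W / 2 := by
    rw [hW4, hW2]; rcases hε with h | h <;> rw [h] <;> intro hh <;> linarith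
  have Dlf : (2:ℤ) ^ (2*e+2) + W / 4 + 2 ^ e ≠ 2 ^ (2*e+3) + W / 2 := by
    rw [hW4, hW2]; rcases hε with h | h <;> rw [h] <;> intro hh <;> linarith
  -- positivity of the three weights
  have Psm : (0:ℤ) < 2 ^ (2*e+2) + W / 4 - 2 ^ e := by
    rw [hW4]; rcases hε with h | h <;> rw [h] <;> linarith
  have Plg : (0:ℤ) < 2 ^ (2*e+2) + W / 4 + 2 ^ e := by
    rw [hW4]; rcases hε with h | h <;> rw [h] <;> linarith
  have Pfl : (0:ℤ) < 2 ^ (2*e+3) + W / 2 := by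
    rw [hW2]; rcases hε with h | h <;> rw [h] <;> linarith
  -- trichotomy
  have tri : ∀ u : ZMod 2 × K × K, u ≠ 0 →
      (wt17 (cw17 B₁ B₂ u) : ℤ) = 2 ^ (2*e+2) + W / 4 - 2 ^ e ∨
      (wt17 (cw17 B₁ B₂ u) : ℤ) = 2 ^ (2*e+2) + W / 4 + 2 ^ e ∨
      (wt17 (cw17 B₁ B₂ u) : ℤ) = 2 ^ (2*e+3) + W / 2 := by
    rintro ⟨a, b, c⟩ hu
    by_cases hbc : b = 0 ∧ c = 0
    · obtain ⟨rfl, rfl⟩ := hbc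
      have ha : a ≠ 0 := by
        intro h; exact hu (by rw [h]; rfl)
      exact Or.inr (Or.inr (hwt_full a ha))
    · rcases hwt_char a b c hbc with ⟨_, h⟩ | ⟨_, h⟩
      · exact Or.inl h
      · exact Or.inr (Or.inl h)
  -- injectivity
  have hker : ∀ u : ZMod 2 × K × K, cw17 B₁ B₂ u = 0 → u = 0 := by
    intro u hu
    by_contra h0
    have h := tri u h0
    have hw0 : wt17 (cw17 B₁ B₂ u) = 0 := by
      rw [hu]; simp [wt17]
    rw [hw0] at h
    push_cast at h
    rcases h with h | h | h
    · exact absurd h.symm (ne_of_gt Psm)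
    · exact absurd h.symm (ne_of_gt Plg)
    · exact absurd h.symm (ne_of_gt Pfl)
  have hinj : Function.Injective (cw17 B₁ B₂) := by
    intro u v h
    have h0 : cw17 B₁ B₂ (u - v) = 0 := by
      rw [cw17_sub, h, sub_self]
    exact sub_eq_zero.mp (hker _ h0)
  -- flipping a
  have hflipeps : ∀ a : ZMod 2, (-1:ℤ)^(a+1).val = -(-1:ℤ)^a.val := by
    intro a; rw [eps_add17]; simp [ZMod.val_one]
  have haa : ∀ a : ZMod 2, a + 1 + 1 = a := by decide
  have hP22 : (0:ℤ) < 2 ^ (e+2) := pow_pos two_pos _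
  have step : ∀ (a : ZMod 2) (b c : K), ¬(b = 0 ∧ c = 0) →
      (wt17 (cw17 B₁ B₂ (a,b,c)) : ℤ) = 2 ^ (2*e+2) + W / 4 - 2 ^ e →
      (wt17 (cw17 B₁ B₂ (a+1,b,c)) : ℤ) = 2 ^ (2*e+2) + W / 4 + 2 ^ e := by
    intro a b c hbc hs
    rcases hwt_char a b c hbc with ⟨h1, _⟩ | ⟨_, h2⟩
    · rcases hwt_char (a+1) b c hbc with ⟨h1', _⟩ | ⟨_, h2'⟩
      · exfalso
        rw [hflipeps] at h1'
        have : -((-1:ℤ)^a.val * (S17 B₁ b * S17 B₂ c)) = 2 ^ (e+2) := by linarith [h1']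
        linarith
      · exact h2'
    · exact absurd (hs.symm.trans h2) Dsl
  have stepback : ∀ (a : ZMod 2) (b c : K), ¬(b = 0 ∧ c = 0) →
      (wt17 (cw17 B₁ B₂ (a,b,c)) : ℤ) = 2 ^ (2*e+2) + W / 4 + 2 ^ e →
      (wt17 (cw17 B₁ B₂ (a+1,b,c)) : ℤ) = 2 ^ (2*e+2) + W / 4 - 2 ^ e := by
    intro a b c hbc hs
    rcases hwt_char a b c hbc with ⟨_, h2⟩ | ⟨h1, _⟩
    · exact absurd (h2.symm.trans hs) Dsl
    · rcases hwt_char (a+1) b c hbc with ⟨_, h2'⟩ | ⟨h1', _⟩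
      · exact h2'
      · exfalso
        rw [hflipeps] at h1'
        have : -((-1:ℤ)^a.val * (S17 B₁ b * S17 B₂ c)) = -2 ^ (e+2) := by linarith [h1']
        linarith
  -- membership cleanup: a codeword of small/large weight has (b,c) ≠ 0
  have hbcne : ∀ (a : ZMod 2) (b c : K), (a,b,c) ≠ 0 →
      ((wt17 (cw17 B₁ B₂ (a,b,c)) : ℤ) = 2 ^ (2*e+2) + W / 4 - 2 ^ e ∨
       (wt17 (cw17 B₁ B₂ (a,b,c)) : ℤ) = 2 ^ (2*e+2) + W / 4 + 2 ^ e) →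
      ¬(b = 0 ∧ c = 0) := by
    rintro a b c hu hw ⟨rfl, rfl⟩
    have ha : a ≠ 0 := by intro h; exact hu (by rw [h]; rfl)
    have hf := hwt_full a ha
    rcases hw with hw | hw
    · exact Dsf (hw.symm.trans hf)
    · exact Dlf (hw.symm.trans hf)
  -- count of the full-weight codeword
  have hFfcard : (univ.filter (fun u : ZMod 2 × K × K => u ≠ 0 ∧
      (wt17 (cw17 B₁ B₂ u) : ℤ) = 2 ^ (2*e+3) + W / 2)).card = 1 := by
    have heq : (univ.filter (fun u : ZMod 2 × K × K => u ≠ 0 ∧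
      (wt17 (cw17 B₁ B₂ u) : ℤ) = 2 ^ (2*e+3) + W / 2)) = {((1 : ZMod 2), (0:K), (0:K))} := by
      ext u
      obtain ⟨a, b, c⟩ := u
      simp only [Finset.mem_filter, Finset.mem_univ, true_and, Finset.mem_singleton]
      constructor
      · rintro ⟨h0, hwf⟩
        by_cases hbc : b = 0 ∧ c = 0
        · obtain ⟨rfl, rfl⟩ := hbc
          have ha : a ≠ 0 := fun h => h0 (by rw [h]; rfl)
          have ha1 : a = 1 := by
            rcases eps_cases17 a with h | h
            · exact absurd h ha
            · exact h
          rw [ha1]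
        · exfalso
          rcases hwt_char a b c hbc with ⟨_, h⟩ | ⟨_, h⟩
          · exact Dsf (h.symm.trans hwf)
          · exact Dlf (h.symm.trans hwf)
      · intro h
        simp only [Prod.mk.injEq] at h
        obtain ⟨rfl, rfl, rfl⟩ := h
        refine ⟨?_, hwt_full 1 one_ne_zero⟩
        intro h'
        exact one_ne_zero (congrArg Prod.fst h')
    rw [heq, Finset.card_singleton]
  -- total number of nonzero vectors
  have htotal : (univ.filter (fun u : ZMod 2 × K × K => u ≠ 0)).card = 2^(2*e+5) - 1 := by
    rw [Finset.filter_ne' univ (0 : ZMod 2 × K × K),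
      Finset.card_erase_of_mem (Finset.mem_univ _), Finset.card_univ]
    have h : Fintype.card (ZMod 2 × K × K) = 2^(2*e+5) := by
      rw [Fintype.card_prod, Fintype.card_prod, hK, ZMod.card]
      ring
    rw [h]
  -- the two middle weight classes have equal size
  have hsl : (univ.filter (fun u : ZMod 2 × K × K => u ≠ 0 ∧
      (wt17 (cw17 B₁ B₂ u) : ℤ) = 2 ^ (2*e+2) + W / 4 - 2 ^ e)).card = (univ.filter (fun u : ZMod 2 × K × K => u ≠ 0 ∧
      (wt17 (cw17 B₁ B₂ u) : ℤ) = 2 ^ (2*e+2) + W / 4 + 2 ^ e)).card := by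
    refine Finset.card_bij' (fun u _ => (u.1 + 1, u.2)) (fun u _ => (u.1 + 1, u.2)) ?_ ?_ ?_ ?_
    · rintro ⟨a, b, c⟩ ha
      simp only [Finset.mem_filter, Finset.mem_univ, true_and] at ha ⊢
      obtain ⟨h0, hw⟩ := ha
      have hbc : ¬(b = 0 ∧ c = 0) := hbcne a b c h0 (Or.inl hw)
      refine ⟨?_, step a b c hbc hw⟩
      intro hz
      exact hbc ⟨congrArg (fun u => u.2.1) hz, congrArg (fun u => u.2.2) hz⟩
    · rintro ⟨a, b, c⟩ ha
      simp only [Finset.mem_filter, Finset.mem_univ, true_and] at ha ⊢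
      obtain ⟨h0, hw⟩ := ha
      have hbc : ¬(b = 0 ∧ c = 0) := hbcne a b c h0 (Or.inr hw)
      refine ⟨?_, stepback a b c hbc hw⟩
      intro hz
      exact hbc ⟨congrArg (fun u => u.2.1) hz, congrArg (fun u => u.2.2) hz⟩
    · rintro ⟨a, b, c⟩ _
      simp [haa]
    · rintro ⟨a, b, c⟩ _
      simp [haa]
  -- partition of the nonzero vectors
  have hunion : (univ.filter (fun u : ZMod 2 × K × K => u ≠ 0))
      = (univ.filter (fun u : ZMod 2 × K × K => u ≠ 0 ∧
      (wt17 (cw17 B₁ B₂ u) : ℤ) = 2 ^ (2*e+2) + W / 4 - 2 ^ e)) ∪ (univ.filter (fun u : ZMod 2 × K × K => u ≠ 0 ∧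
      (wt17 (cw17 B₁ B₂ u) : ℤ) = 2 ^ (2*e+2) + W / 4 + 2 ^ e)) ∪ (univ.filter (fun u : ZMod 2 × K × K => u ≠ 0 ∧
      (wt17 (cw17 B₁ B₂ u) : ℤ) = 2 ^ (2*e+3) + W / 2)) := by
    ext u
    simp only [Finset.mem_filter, Finset.mem_univ, true_and, Finset.mem_union]
    constructor
    · intro h0
      rcases tri u h0 with h | h | h
      · exact Or.inl (Or.inl ⟨h0, h⟩)
      · exact Or.inl (Or.inr ⟨h0, h⟩)
      · exact Or.inr ⟨h0, h⟩
    · rintro ((⟨h0, _⟩ | ⟨h0, _⟩) | ⟨h0, _⟩) <;> exact h0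
  have hd1 : Disjoint (univ.filter (fun u : ZMod 2 × K × K => u ≠ 0 ∧
      (wt17 (cw17 B₁ B₂ u) : ℤ) = 2 ^ (2*e+2) + W / 4 - 2 ^ e)) (univ.filter (fun u : ZMod 2 × K × K => u ≠ 0 ∧
      (wt17 (cw17 B₁ B₂ u) : ℤ) = 2 ^ (2*e+2) + W / 4 + 2 ^ e)) := by
    rw [Finset.disjoint_left]
    intro u hu hv
    simp only [Finset.mem_filter] at hu hv
    exact Dsl (hu.2.2.symm.trans hv.2.2)
  have hd2 : Disjoint ((univ.filter (fun u : ZMod 2 × K × K => u ≠ 0 ∧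
      (wt17 (cw17 B₁ B₂ u) : ℤ) = 2 ^ (2*e+2) + W / 4 - 2 ^ e)) ∪ (univ.filter (fun u : ZMod 2 × K × K => u ≠ 0 ∧
      (wt17 (cw17 B₁ B₂ u) : ℤ) = 2 ^ (2*e+2) + W / 4 + 2 ^ e))) (univ.filter (fun u : ZMod 2 × K × K => u ≠ 0 ∧
      (wt17 (cw17 B₁ B₂ u) : ℤ) = 2 ^ (2*e+3) + W / 2)) := by
    rw [Finset.disjoint_left]
    intro u hu hv
    simp only [Finset.mem_union, Finset.mem_filter] at hu hv
    rcases hu with hu | hu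
    · exact Dsf (hu.2.2.symm.trans hv.2.2)
    · exact Dlf (hu.2.2.symm.trans hv.2.2)
  have hsum : (univ.filter (fun u : ZMod 2 × K × K => u ≠ 0 ∧
      (wt17 (cw17 B₁ B₂ u) : ℤ) = 2 ^ (2*e+2) + W / 4 - 2 ^ e)).card + (univ.filter (fun u : ZMod 2 × K × K => u ≠ 0 ∧
      (wt17 (cw17 B₁ B₂ u) : ℤ) = 2 ^ (2*e+2) + W / 4 + 2 ^ e)).card + (univ.filter (fun u : ZMod 2 × K × K => u ≠ 0 ∧
      (wt17 (cw17 B₁ B₂ u) : ℤ) = 2 ^ (2*e+3) + W / 2)).card = 2^(2*e+5) - 1 := by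
    rw [← Finset.card_union_of_disjoint hd1, ← Finset.card_union_of_disjoint hd2, ← hunion,
      htotal]
  have hFscard : (univ.filter (fun u : ZMod 2 × K × K => u ≠ 0 ∧
      (wt17 (cw17 B₁ B₂ u) : ℤ) = 2 ^ (2*e+2) + W / 4 - 2 ^ e)).card = 2^(2*e+4) - 1 := by
    have h2 : (2:ℕ)^(2*e+5) = 2*2^(2*e+4) := by ring
    have h3 : (1:ℕ) ≤ 2^(2*e+4) := Nat.one_le_two_pow
    omega
  have hFlcard : (univ.filter (fun u : ZMod 2 × K × K => u ≠ 0 ∧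
      (wt17 (cw17 B₁ B₂ u) : ℤ) = 2 ^ (2*e+2) + W / 4 + 2 ^ e)).card = 2^(2*e+4) - 1 := by rw [← hsl]; exact hFscard
  exact ⟨hcardD, hinj, tri, hFscard, hFlcard, hFfcard⟩
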